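/- Let c > 0 and let D_i ⊂ ℝⁿ be bounded measurable sets satisfying |B_r(x) ∩ D_i| > c rⁿ for all x ∈ ∂D_i and 0 < r < diam(D_i), with diam(D_i) uniformly bounded below, and χ_{D_i} → χ_D in L¹. Then for every ε > 0 there is N such that for all i > N, D_i is contained in the ε-neighborhood of D. Combined with containment of D in the ε-neighborhood of D_i, this yields Hausdorff convergence d^H(D_i, D) → 0. -/
import Mathlib


open MeasureTheory Metric Set Filter
open scoped ENNReal Topology

/-- A preconnected set meeting both a set and its complement meets its frontier. -/
lemma aux_frontier {α : Type*} [TopologicalSpace α] {s t : Set α}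
    (hs : IsPreconnected s) (h1 : (s ∩ t).Nonempty) (h2 : (s \ t).Nonempty) :
    (s ∩ frontier t).Nonempty := by
  by_contra h
  rw [Set.not_nonempty_iff_eq_empty] at h
  have hsub : s ⊆ interior t ∪ (closure t)ᶜ := by
    intro x hx
    have hxf : x ∉ frontier t := fun hf => (Set.eq_empty_iff_forall_notMem.1 h x) ⟨hx, hf⟩
    by_cases hxc : x ∈ closure t
    · left
      rcases hxc.out with _
      by_contra hxi
      exact hxf ⟨hxc, hxi⟩
    · right; exact hxc
  have hu : (s ∩ interior t).Nonempty := by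
    obtain ⟨x, hxs, hxt⟩ := h1
    refine ⟨x, hxs, ?_⟩
    have hxf : x ∉ frontier t := fun hf => (Set.eq_empty_iff_forall_notMem.1 h x) ⟨hxs, hf⟩
    by_contra hxi
    exact hxf ⟨subset_closure hxt, hxi⟩
  have hv : (s ∩ (closure t)ᶜ).Nonempty := by
    obtain ⟨z, hzs, hzt⟩ := h2
    refine ⟨z, hzs, ?_⟩
    have hzf : z ∉ frontier t := fun hf => (Set.eq_empty_iff_forall_notMem.1 h z) ⟨hzs, hf⟩
    intro hzc
    exact hzf ⟨hzc, fun hzi => hzt (interior_subset hzi)⟩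
  obtain ⟨w, _, hw1, hw2⟩ := hs (interior t) (closure t)ᶜ isOpen_interior
    isClosed_closure.isOpen_compl hsub hu hv
  exact hw2 (subset_closure (interior_subset hw1))

/-- If `D_i ∈ 𝒟_c` have diameters uniformly bounded below and `χ_{D_i} → χ_D` in `L¹`
(with `D` a representative satisfying `0 < |D ∩ B_r(x)|` for `x ∈ ∂D`, `r > 0`), then
eventually `D_i` is contained in the `ε`-neighborhood of `D`; combined with the reverse
containment this gives Hausdorff convergence `d^H(D_i, D) → 0`. -/
theorem stmt_9 {n : ℕ} (c d₀ : ℝ) (hc : 0 < c) (hd₀ : 0 < d₀)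
    (D : ℕ → Set (EuclideanSpace ℝ (Fin n))) (D₀ : Set (EuclideanSpace ℝ (Fin n)))
    (hDm : ∀ i, MeasurableSet (D i)) (hDb : ∀ i, Bornology.IsBounded (D i))
    (hD₀m : MeasurableSet D₀) (hD₀b : Bornology.IsBounded D₀)
    (hdiam : ∀ i, d₀ ≤ diam (D i))
    (hdens : ∀ i, ∀ x ∈ frontier (D i), ∀ r : ℝ, 0 < r → r < diam (D i) →
      ENNReal.ofReal (c * r ^ n) < volume (ball x r ∩ D i))
    (hconv : Tendsto (fun i => volume (symmDiff (D i) D₀)) atTop (nhds 0))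
    (hrep : ∀ x ∈ frontier D₀, ∀ r : ℝ, 0 < r → 0 < volume (D₀ ∩ ball x r)) :
    (∀ ε : ℝ, 0 < ε → ∃ N : ℕ, ∀ i > N, D i ⊆ Metric.thickening ε D₀) ∧
    ((∀ ε : ℝ, 0 < ε → ∃ N : ℕ, ∀ i > N, D₀ ⊆ Metric.thickening ε (D i)) →
      Tendsto (fun i => Metric.hausdorffDist (D i) D₀) atTop (nhds 0)) := by
  have part1 : ∀ ε : ℝ, 0 < ε → ∃ N : ℕ, ∀ i > N, D i ⊆ Metric.thickening ε D₀ := by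
    intro ε hε
    set ρ : ℝ := min ε d₀ / 2 with hρdef
    have hρ : 0 < ρ := by positivity
    have hρε : 2 * ρ ≤ ε := by
      rw [hρdef]; have := min_le_left ε d₀; linarith
    have hρd : ρ < d₀ := by
      rw [hρdef]; have := min_le_right ε d₀; linarith
    set δ : ℝ≥0∞ := min (ENNReal.ofReal (c * ρ ^ n))
      (volume (ball (0 : EuclideanSpace ℝ (Fin n)) ρ)) with hδdef
    have hδ : 0 < δ :=
      lt_min (ENNReal.ofReal_pos.2 (by positivity)) (measure_ball_pos _ _ hρ)
    have hev := hconv.eventually_lt_const hδ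
    rw [Filter.eventually_atTop] at hev
    obtain ⟨N, hN⟩ := hev
    refine ⟨N, fun i hi x hx => ?_⟩
    by_contra hxth
    have hsmall : volume (symmDiff (D i) D₀) < δ := hN i (le_of_lt hi)
    -- the ball of radius ε around x misses D₀
    have hdisj : ∀ y ∈ ball x ε, y ∉ D₀ := by
      intro y hy hyD₀
      apply hxth
      rw [Metric.mem_thickening_iff_infEdist_lt]
      calc EMetric.infEdist x D₀ ≤ edist x y := EMetric.infEdist_le_edist_of_mem hyD₀
        _ < ENNReal.ofReal ε := by
            rw [edist_dist]
            exact (ENNReal.ofReal_lt_ofReal_iff hε).2 (by rwa [dist_comm, ← mem_ball])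
    have hsub : ball x ε ∩ D i ⊆ symmDiff (D i) D₀ := by
      intro y ⟨hy1, hy2⟩
      rw [Set.mem_symmDiff]
      exact Or.inl ⟨hy2, hdisj y hy1⟩
    by_cases hball : ball x ρ ⊆ D i
    · -- whole small ball inside D i, disjoint from D₀
      have h1 : ball x ρ ⊆ symmDiff (D i) D₀ := by
        intro y hy
        exact hsub ⟨ball_subset_ball (by linarith) hy, hball hy⟩
      have h2 : volume (ball x ρ) ≤ volume (symmDiff (D i) D₀) := measure_mono h1
      have h3 : δ ≤ volume (ball x ρ) := by
        rw [show volume (ball x ρ) = volume (ball (0 : EuclideanSpace ℝ (Fin n)) ρ) from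
          Measure.addHaar_ball_center volume x ρ]
        exact min_le_right _ _
      exact absurd (h3.trans_lt (h2.trans_lt hsmall)) (lt_irrefl δ)
    · -- find a frontier point of D i in the small ball
      obtain ⟨z, hz1, hz2⟩ := Set.not_subset.1 hball
      obtain ⟨y, hy1, hy2⟩ := aux_frontier (convex_ball x ρ).isPreconnected
        ⟨x, mem_ball_self hρ, hx⟩ ⟨z, hz1, hz2⟩
      have hdy := hdens i y hy2 ρ hρ (hρd.trans_le (hdiam i))
      have hysub : ball y ρ ⊆ ball x ε := by
        intro w hw
        rw [mem_ball] at hw hy1 ⊢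
        calc dist w x ≤ dist w y + dist y x := dist_triangle _ _ _
          _ < ρ + ρ := by linarith
          _ ≤ ε := by linarith
      have h2 : volume (ball y ρ ∩ D i) ≤ volume (symmDiff (D i) D₀) :=
        measure_mono fun w ⟨hw1, hw2⟩ => hsub ⟨hysub hw1, hw2⟩
      have h3 : δ ≤ ENNReal.ofReal (c * ρ ^ n) := min_le_left _ _
      exact absurd ((h3.trans_lt hdy).trans_le (h2.trans hsmall.le)) (lt_irrefl δ)
  refine ⟨part1, fun H => ?_⟩
  rw [Metric.tendsto_atTop]
  intro ε hε
  obtain ⟨N₁, hN₁⟩ := part1 (ε / 2) (by positivity)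
  obtain ⟨N₂, hN₂⟩ := H (ε / 2) (by positivity)
  refine ⟨max N₁ N₂ + 1, fun i hi => ?_⟩
  have hi1 : i > N₁ := lt_of_le_of_lt (le_max_left _ _) (lt_of_lt_of_le (Nat.lt_succ_self _) hi)
  have hi2 : i > N₂ := lt_of_le_of_lt (le_max_right _ _) (lt_of_lt_of_le (Nat.lt_succ_self _) hi)
  have hE : EMetric.hausdorffEdist (D i) D₀ ≤ ENNReal.ofReal (ε / 2) := by
    apply EMetric.hausdorffEdist_le_of_infEdist
    · intro x hx
      exact le_of_lt (Metric.mem_thickening_iff_infEdist_lt.1 (hN₁ i hi1 hx))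
    · intro x hx
      exact le_of_lt (Metric.mem_thickening_iff_infEdist_lt.1 (hN₂ i hi2 hx))
  have hd : Metric.hausdorffDist (D i) D₀ ≤ ε / 2 := by
    rw [Metric.hausdorffDist]
    calc (EMetric.hausdorffEdist (D i) D₀).toReal
        ≤ (ENNReal.ofReal (ε / 2)).toReal := ENNReal.toReal_mono ENNReal.ofReal_ne_top hE
      _ = ε / 2 := ENNReal.toReal_ofReal (by positivity)
  rw [Real.dist_eq, sub_zero, abs_of_nonneg Metric.hausdorffDist_nonneg]
  linarith
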